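/- Let κ > 0, μ, C ∈ ℂ, δ₋₁, δ₀, δ₁, σ₀, σ₁ ∈ ℝ, r > 0, and let g be holomorphic on the disk B(0,r). Set δ(z) := 2/z + δ₋₁ + δ₀·z + δ₁·z² and σ(z) := -√κ·(1 + σ₀·z + σ₁·z²). If for all z ∈ B(0,r) with Im z > 0 one has δ(z)·(-i/z + g(z)) + μ·(σ(z)·δ'(z) - σ'(z)·δ(z)) + (1/2)·σ(z)²·(i/z² + g'(z)) = C·σ(z), then necessarily μ = i(4-κ)/(4√κ). That is, the singular behaviour j⁺(z) = -i/z + O(1) of the current at the source forces the pre-pre-Schwarzian order μ = i(4-κ)/(4√κ). -/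
import Mathlib


open Complex

/-- The singular behaviour `j⁺(z) = -i/z + O(1)` of the current at the source
forces the pre-pre-Schwarzian order `μ = i(4-κ)/(4√κ)`. -/
theorem mu_forced_by_singularity (κ : ℝ) (hκ : 0 < κ) (μ C : ℂ)
    (δm1 δ0 δ1 σ0 σ1 : ℝ) (r : ℝ) (hr : 0 < r) (g : ℂ → ℂ)
    (hg : DifferentiableOn ℂ g (Metric.ball 0 r))
    (δ σ dδ dσ : ℂ → ℂ)
    (hδ : ∀ z, δ z = 2 / z + (δm1 : ℂ) + (δ0 : ℂ) * z + (δ1 : ℂ) * z ^ 2)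
    (hdδ : ∀ z, dδ z = -2 / z ^ 2 + (δ0 : ℂ) + 2 * (δ1 : ℂ) * z)
    (hσ : ∀ z, σ z = -(Real.sqrt κ : ℂ) * (1 + (σ0 : ℂ) * z + (σ1 : ℂ) * z ^ 2))
    (hdσ : ∀ z, dσ z = -(Real.sqrt κ : ℂ) * ((σ0 : ℂ) + 2 * (σ1 : ℂ) * z))
    (heq : ∀ z ∈ Metric.ball (0 : ℂ) r, 0 < z.im →
      δ z * (-Complex.I / z + g z)
        + μ * (σ z * dδ z - dσ z * δ z)
        + (1 / 2) * σ z ^ 2 * (Complex.I / z ^ 2 + deriv g z)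
      = C * σ z) :
    μ = Complex.I * (4 - (κ : ℂ)) / (4 * (Real.sqrt κ : ℂ)) := by
  set s : ℂ := (Real.sqrt κ : ℂ) with hs
  have hs2 : s ^ 2 = (κ : ℂ) := by
    rw [hs]; norm_cast; rw [sq]; exact Real.mul_self_sqrt hκ.le
  have hs0 : s ≠ 0 := by
    rw [hs]; exact_mod_cast (Real.sqrt_pos.mpr hκ).ne'
  have h0r : (0 : ℂ) ∈ Metric.ball (0 : ℂ) r := by simpa using hr
  have hga : AnalyticOnNhd ℂ g (Metric.ball 0 r) :=
    hg.analyticOnNhd Metric.isOpen_ball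
  have hgc : ContinuousAt g 0 := (hga 0 h0r).continuousAt
  have hg'c : ContinuousAt (deriv g) 0 := ((hga.deriv) 0 h0r).continuousAt
  set G : ℂ → ℂ := fun z =>
    (2 + (δm1 : ℂ) * z + (δ0 : ℂ) * z ^ 2 + (δ1 : ℂ) * z ^ 3) * (-Complex.I)
    + (2 * z + (δm1 : ℂ) * z ^ 2 + (δ0 : ℂ) * z ^ 3 + (δ1 : ℂ) * z ^ 4) * g z
    + μ * (σ z * (-2 + (δ0 : ℂ) * z ^ 2 + 2 * (δ1 : ℂ) * z ^ 3)
        - dσ z * (2 * z + (δm1 : ℂ) * z ^ 2 + (δ0 : ℂ) * z ^ 3 + (δ1 : ℂ) * z ^ 4))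
    + (1 / 2) * σ z ^ 2 * Complex.I
    + (1 / 2) * σ z ^ 2 * z ^ 2 * deriv g z
    - C * σ z * z ^ 2 with hG
  have hσc : Continuous σ := by
    have : σ = fun z => -s * (1 + (σ0 : ℂ) * z + (σ1 : ℂ) * z ^ 2) := funext hσ
    rw [this]; fun_prop
  have hdσc : Continuous dσ := by
    have : dσ = fun z => -s * ((σ0 : ℂ) + 2 * (σ1 : ℂ) * z) := funext hdσ
    rw [this]; fun_prop
  have hGc : ContinuousAt G 0 := by
    rw [hG]
    fun_prop
  have L : Filter.Tendsto (fun t : ℝ => (t : ℂ) * Complex.I)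
      (nhdsWithin 0 (Set.Ioi 0)) (nhds 0) := by
    have hc : Continuous (fun t : ℝ => (t : ℂ) * Complex.I) := by fun_prop
    have h1 := hc.tendsto (0 : ℝ)
    simp only [Complex.ofReal_zero, zero_mul] at h1
    exact h1.mono_left nhdsWithin_le_nhds
  have hGt : Filter.Tendsto (fun t : ℝ => G ((t : ℂ) * Complex.I))
      (nhdsWithin 0 (Set.Ioi 0)) (nhds (G 0)) := hGc.tendsto.comp L
  have key : ∀ z : ℂ, z ≠ 0 → G z = (δ z * (-Complex.I / z + g z) + μ * (σ z * dδ z - dσ z * δ z)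
      + (1 / 2) * σ z ^ 2 * (Complex.I / z ^ 2 + deriv g z) - C * σ z) * z ^ 2 := by
    intro z hz0
    rw [hG]
    simp only [hδ z, hdδ z]
    have h1 : z * z⁻¹ = 1 := mul_inv_cancel₀ hz0
    linear_combination (-((-2 * Complex.I - 2 * μ * σ z + (1 / 2) * σ z ^ 2 * Complex.I)
        * (1 + z * z⁻¹)
      + (2 * g z - Complex.I * ((δm1 : ℂ) + (δ0 : ℂ) * z + (δ1 : ℂ) * z ^ 2)
        - 2 * μ * dσ z) * z)) * h1
  have hGz : ∀ᶠ t : ℝ in nhdsWithin 0 (Set.Ioi 0), G ((t : ℂ) * Complex.I) = 0 := by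
    filter_upwards [Ioo_mem_nhdsGT_of_mem (Set.mem_Ico.mpr ⟨le_refl 0, hr⟩)] with t ht
    set z : ℂ := (t : ℂ) * Complex.I with hz
    have ht0 : (0 : ℝ) < t := ht.1
    have hz0 : z ≠ 0 := by
      rw [hz]
      simp [Complex.ext_iff, ht0.ne']
    have hzb : z ∈ Metric.ball (0 : ℂ) r := by
      rw [hz]
      simp only [Metric.mem_ball, dist_zero_right, norm_mul, Complex.norm_I, mul_one,
        Complex.norm_real, Real.norm_eq_abs]
      rw [abs_of_pos ht0]; exact ht.2
    have hzi : 0 < z.im := by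
      rw [hz]; simpa using ht0
    have he := heq z hzb hzi
    rw [key z hz0, he, sub_self, zero_mul]
  have hG0 : G 0 = 0 :=
    tendsto_nhds_unique hGt ((Filter.tendsto_congr' hGz).mpr tendsto_const_nhds)
  have hG0' : G 0 = -2 * Complex.I + μ * (2 * s) + (1 / 2) * s ^ 2 * Complex.I := by
    rw [hG]
    simp only [hσ 0, hdσ 0]
    ring
  rw [hG0'] at hG0
  rw [hs2] at hG0
  field_simp
  linear_combination 2 * hG0
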